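/- Let F : R^D → R^O be an affine map F(u) = F u + f, with prior N(μ_pr, Γ_pr) and noise N(μ_E, Γ_E) Gaussian with SPD covariances, y ∈ R^O, and θ ∈ R \ {0}. Let (μ̂, Ĉ) with Ĉ an invertible lower-triangular matrix be a stationary point of L_θ(μ, C) = θ² tr(Γ⁻¹Γ_pr) + ‖μ−μ_pr‖²_{Γ_pr⁻¹} + θ² tr(Γ_pr⁻¹Γ) + ‖y − μ_E − F(μ)‖²_{Γ_E⁻¹} + tr(Γ_E⁻¹ (F̃(θC + μ 1_Dᵀ) − F(μ)1_Dᵀ)(F̃(θC + μ 1_Dᵀ) − F(μ)1_Dᵀ)ᵀ), where Γ = C Cᵀ and F̃ applies F columnwise. Set Γ̂ = Ĉ Ĉᵀ. Then μ̂ = u_MAP and Γ̂ Γ_pr⁻¹ Γ̂ = Γ_Lap, with u_MAP and Γ_Lap given by the affine formulas u_MAP = Γ_Lap(Fᵀ Γ_E⁻¹ (y − f − μ_E) + Γ_pr⁻¹ μ_pr) and Γ_Lap = (Fᵀ Γ_E⁻¹ F + Γ_pr⁻¹)⁻¹. -/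

import Mathlib

open Matrix Filter Topology

private lemma quadDeriv (c0 c1 c2 : ℝ) :
    HasDerivAt (fun t : ℝ => c0 + t * c1 + t ^ 2 * c2) c1 0 := by
  have h1 : HasDerivAt (fun t : ℝ => t * c1) c1 0 := by
    simpa using (hasDerivAt_id (0:ℝ)).mul_const c1
  have h2 : HasDerivAt (fun t : ℝ => t ^ 2 * c2) 0 0 := by
    simpa using (hasDerivAt_pow 2 (0:ℝ)).mul_const c2
  have h := ((hasDerivAt_const (0:ℝ) c0).add h1).add h2
  rw [zero_add, add_zero] at h
  exact h

private lemma dp_sym {D : ℕ} (M : Matrix (Fin D) (Fin D) ℝ) (hM : Mᵀ = M)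
    (a b : Fin D → ℝ) : a ⬝ᵥ M *ᵥ b = b ⬝ᵥ M *ᵥ a := by
  rw [dotProduct_mulVec, ← Matrix.mulVec_transpose, hM, dotProduct_comm]

private lemma dp_shift {D O : ℕ} (Fm : Matrix (Fin O) (Fin D) ℝ) (v : Fin D → ℝ)
    (u : Fin O → ℝ) : (Fm *ᵥ v) ⬝ᵥ u = v ⬝ᵥ (Fmᵀ *ᵥ u) := by
  rw [dotProduct_comm, dotProduct_mulVec, ← Matrix.mulVec_transpose, dotProduct_comm]

private lemma dp_quad {D : ℕ} (M : Matrix (Fin D) (Fin D) ℝ) (a v : Fin D → ℝ) (t : ℝ) :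
    (a + t • v) ⬝ᵥ M *ᵥ (a + t • v) =
      a ⬝ᵥ M *ᵥ a + t * (v ⬝ᵥ M *ᵥ a + a ⬝ᵥ M *ᵥ v) + t ^ 2 * (v ⬝ᵥ M *ᵥ v) := by
  simp [Matrix.mulVec_add, Matrix.mulVec_smul, add_dotProduct, dotProduct_add,
    smul_dotProduct, dotProduct_smul, smul_eq_mul]
  ring

private lemma sq_expand {D n : ℕ} (Z W : Matrix (Fin n) (Fin D) ℝ) (t : ℝ) :
    (Z + t • W) * (Z + t • W)ᵀ =
      Z * Zᵀ + t • (Z * Wᵀ + W * Zᵀ) + t ^ 2 • (W * Wᵀ) := by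
  simp [Matrix.transpose_add, Matrix.transpose_smul, Matrix.mul_add, Matrix.add_mul,
    Matrix.mul_smul, Matrix.smul_mul, smul_smul, smul_add, pow_two]
  abel

private lemma tr_zero_of_all {D : ℕ} (N : Matrix (Fin D) (Fin D) ℝ)
    (h : (N * Nᵀ).trace = 0) : N = 0 := by
  have h2 : ∑ i, ∑ j, (N i j) ^ 2 = 0 := by
    simpa [Matrix.trace, Matrix.mul_apply, Matrix.diag, sq] using h
  ext i j
  have hi := (Finset.sum_eq_zero_iff_of_nonneg (fun i _ => Finset.sum_nonneg
    (fun j _ => sq_nonneg (N i j)))).mp h2 i (Finset.mem_univ i)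
  have hj := (Finset.sum_eq_zero_iff_of_nonneg (fun j _ => sq_nonneg (N i j))).mp hi j
    (Finset.mem_univ j)
  simpa using pow_eq_zero_iff (n := 2) (by norm_num) |>.mp hj

private lemma trace_pair {D : ℕ} (M C0 Vm : Matrix (Fin D) (Fin D) ℝ) (hM : Mᵀ = M) :
    (M * (C0 * Vmᵀ + Vm * C0ᵀ)).trace = 2 * ((C0ᵀ * M) * Vm).trace := by
  have h1 : (M * (C0 * Vmᵀ)).trace = ((C0ᵀ * M) * Vm).trace := by
    rw [show M * (C0 * Vmᵀ) = (M * C0) * Vmᵀ by rw [Matrix.mul_assoc],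
      Matrix.trace_mul_comm]
    rw [← Matrix.trace_transpose (Vmᵀ * (M * C0))]
    simp [Matrix.transpose_mul, hM, Matrix.mul_assoc]
  have h2 : (M * (Vm * C0ᵀ)).trace = ((C0ᵀ * M) * Vm).trace := by
    rw [show M * (Vm * C0ᵀ) = (M * Vm) * C0ᵀ by rw [Matrix.mul_assoc],
      Matrix.trace_mul_comm, Matrix.mul_assoc]
  rw [Matrix.mul_add, Matrix.trace_add, h1, h2]; ring

private lemma term5_eq {D O : ℕ} (Fm : Matrix (Fin O) (Fin D) ℝ) (f : Fin O → ℝ) (θ : ℝ)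
    (μ : Fin D → ℝ) (C : Fin D → Fin D → ℝ) :
    (Matrix.of fun o k => (Fm *ᵥ (fun i => θ * C i k + μ i) + f) o) -
      vecMulVec (Fm *ᵥ μ + f) (fun _ => 1) = θ • (Fm * Matrix.of C) := by
  ext o k
  simp only [Matrix.sub_apply, Matrix.of_apply, vecMulVec_apply, Pi.add_apply,
    Matrix.smul_apply, Matrix.mul_apply, Matrix.mulVec, dotProduct, smul_eq_mul, mul_one,
    mul_add, Finset.sum_add_distrib, Finset.mul_sum]
  ring_nf
  exact Finset.sum_congr rfl fun i _ => by ring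

private lemma tr_th {O D : ℕ} (E : Matrix (Fin O) (Fin O) ℝ) (X : Matrix (Fin O) (Fin D) ℝ)
    (θ : ℝ) : (E * (θ • X) * (θ • X)ᵀ).trace = θ ^ 2 * (E * X * Xᵀ).trace := by
  simp [Matrix.transpose_smul, Matrix.mul_smul, Matrix.smul_mul, smul_smul, pow_two,
    Matrix.trace_smul, smul_eq_mul]

private lemma liftQ {D O : ℕ} (E : Matrix (Fin O) (Fin O) ℝ) (Fm : Matrix (Fin O) (Fin D) ℝ)
    (A B : Matrix (Fin D) (Fin D) ℝ) :
    (E * ((Fm * A) * (Fm * B)ᵀ)).trace = ((Fmᵀ * E * Fm) * (A * Bᵀ)).trace := by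
  have h : E * ((Fm * A) * (Fm * B)ᵀ) = (E * (Fm * (A * Bᵀ))) * Fmᵀ := by
    rw [Matrix.transpose_mul]; simp [Matrix.mul_assoc]
  rw [h, Matrix.trace_mul_comm]
  simp [Matrix.mul_assoc]

private lemma inv_trace_deriv {D : ℕ} (Γ S T Γpr : Matrix (Fin D) (Fin D) ℝ)
    (hΓ : IsUnit Γ.det) (m : ℝ → Matrix (Fin D) (Fin D) ℝ)
    (hm : ∀ t, m t = Γ + t • S + t ^ 2 • T) :
    HasDerivAt (fun t => ((m t)⁻¹ * Γpr).trace) (-(((Γ⁻¹ * S) * Γ⁻¹ * Γpr).trace)) 0 := by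
  have hmc : Continuous m := by
    have h : Continuous fun t : ℝ => Γ + t • S + t ^ 2 • T :=
      (continuous_const.add ((continuous_id).smul continuous_const)).add
        ((continuous_pow 2).smul continuous_const)
    exact h.congr fun t => (hm t).symm
  have hm0 : m 0 = Γ := by simp [hm]
  have hdet0 : (m 0).det ≠ 0 := by rw [hm0]; exact hΓ.ne_zero
  have hev : ∀ᶠ t in 𝓝 (0:ℝ), IsUnit (m t).det := by
    filter_upwards [(hmc.matrix_det.continuousAt (x := 0)).eventually_ne hdet0] with t ht
    exact isUnit_iff_ne_zero.mpr ht
  have hinvc : ContinuousAt (fun t => (m t)⁻¹) 0 :=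
    (continuousAt_matrix_inv (m 0) (by
      rw [Ring.inverse_eq_inv']; exact continuousAt_inv₀ hdet0)).comp hmc.continuousAt
  set f : ℝ → ℝ := fun t => ((m t)⁻¹ * Γpr).trace with hf
  set G : ℝ → ℝ := fun t =>
    -(((Γ⁻¹ * S) * (m t)⁻¹ * Γpr).trace) - t * (((Γ⁻¹ * T) * (m t)⁻¹ * Γpr).trace) with hG
  have hGc : ContinuousAt G 0 := by
    have c1 : Continuous fun N : Matrix (Fin D) (Fin D) ℝ => ((Γ⁻¹ * S) * N * Γpr).trace :=
      ((continuous_const.matrix_mul continuous_id).matrix_mul continuous_const).matrix_trace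
    have c2 : Continuous fun N : Matrix (Fin D) (Fin D) ℝ => ((Γ⁻¹ * T) * N * Γpr).trace :=
      ((continuous_const.matrix_mul continuous_id).matrix_mul continuous_const).matrix_trace
    exact ((c1.continuousAt.comp hinvc).neg).sub
      (continuousAt_id.mul (c2.continuousAt.comp hinvc))
  have hG0 : G 0 = -(((Γ⁻¹ * S) * Γ⁻¹ * Γpr).trace) := by simp [hG, hm0]
  have hslope : slope f 0 =ᶠ[𝓝[≠] (0:ℝ)] G := by
    filter_upwards [eventually_nhdsWithin_of_eventually_nhds hev, self_mem_nhdsWithin]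
      with t hu ht
    have ht0 : t ≠ 0 := ht
    obtain ⟨A, hA⟩ : ∃ A, A = t • ((Γ⁻¹ * S) * (m t)⁻¹) + t ^ 2 • ((Γ⁻¹ * T) * (m t)⁻¹) :=
      ⟨_, rfl⟩
    have h2 : Γ⁻¹ = (m t)⁻¹ + A := by
      rw [hA]
      have e1 : Γ⁻¹ * (m t) = 1 + (t • (Γ⁻¹ * S) + t ^ 2 • (Γ⁻¹ * T)) := by
        rw [hm t]
        simp [Matrix.mul_add, Matrix.mul_smul, Matrix.nonsing_inv_mul Γ hΓ, add_assoc]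
      have e2 : Γ⁻¹ * (m t) * (m t)⁻¹ = Γ⁻¹ := by
        rw [Matrix.mul_assoc, Matrix.mul_nonsing_inv _ hu, Matrix.mul_one]
      calc Γ⁻¹ = Γ⁻¹ * (m t) * (m t)⁻¹ := e2.symm
        _ = _ := by rw [e1]; simp [Matrix.add_mul, Matrix.smul_mul]
    have hkey : (m t)⁻¹ - Γ⁻¹ = -A := by rw [h2]; abel
    have hft : f t - f 0 =
        -(t * (((Γ⁻¹ * S) * (m t)⁻¹ * Γpr).trace) + t ^ 2 * (((Γ⁻¹ * T) * (m t)⁻¹ * Γpr).trace)) := by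
      simp only [hf]
      rw [hm0, ← Matrix.trace_sub, ← Matrix.sub_mul, hkey, hA]
      simp [Matrix.add_mul, Matrix.smul_mul, Matrix.neg_mul, Matrix.trace_smul,
        smul_eq_mul, Matrix.mul_assoc]
    rw [slope_def_field, hft, hG]
    field_simp
    ring
  rw [hasDerivAt_iff_tendsto_slope, ← hG0]
  exact (hGc.continuousWithinAt.tendsto).congr' hslope.symm

/-- Theorem `thm:convergenceNew`, affine case: for affine `F(u) = F u + f`,
SPD prior/noise covariances, `θ ≠ 0`, if `(μ̂, Ĉ)` with `Ĉ` invertible lower triangular is a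
stationary point of `L_θ`, then `μ̂ = u_MAP` and `Γ̂ Γ_pr⁻¹ Γ̂ = Γ_Lap` with `Γ̂ = Ĉ Ĉᵀ`. -/
theorem stmt6 {D O : ℕ} (Fm : Matrix (Fin O) (Fin D) ℝ) (f y μE : Fin O → ℝ)
    (μpr : Fin D → ℝ) (Γpr : Matrix (Fin D) (Fin D) ℝ) (hΓpr : Γpr.PosDef)
    (ΓE : Matrix (Fin O) (Fin O) ℝ) (hΓE : ΓE.PosDef)
    (θ : ℝ) (hθ : θ ≠ 0)
    (L : (Fin D → ℝ) × (Fin D → Fin D → ℝ) → ℝ)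
    (hL : ∀ p : (Fin D → ℝ) × (Fin D → Fin D → ℝ),
      L p =
        θ ^ 2 * ((Matrix.of p.2 * (Matrix.of p.2)ᵀ)⁻¹ * Γpr).trace +
        (p.1 - μpr) ⬝ᵥ Γpr⁻¹ *ᵥ (p.1 - μpr) +
        θ ^ 2 * (Γpr⁻¹ * (Matrix.of p.2 * (Matrix.of p.2)ᵀ)).trace +
        (y - μE - (Fm *ᵥ p.1 + f)) ⬝ᵥ ΓE⁻¹ *ᵥ (y - μE - (Fm *ᵥ p.1 + f)) +
        (ΓE⁻¹ *
          ((Matrix.of fun o k => (Fm *ᵥ (fun i => θ * p.2 i k + p.1 i) + f) o) -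
            vecMulVec (Fm *ᵥ p.1 + f) (fun _ => 1)) *
          ((Matrix.of fun o k => (Fm *ᵥ (fun i => θ * p.2 i k + p.1 i) + f) o) -
            vecMulVec (Fm *ᵥ p.1 + f) (fun _ => 1))ᵀ).trace)
    (μhat : Fin D → ℝ) (Chat : Fin D → Fin D → ℝ)
    (hChatLow : ∀ i j : Fin D, (i : ℕ) < (j : ℕ) → Chat i j = 0)
    (hChatInv : IsUnit (Matrix.of Chat).det)
    (hstat : HasFDerivAt L (0 : ((Fin D → ℝ) × (Fin D → Fin D → ℝ)) →L[ℝ] ℝ) (μhat, Chat))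
    (Γhat : Matrix (Fin D) (Fin D) ℝ) (hΓhat : Γhat = Matrix.of Chat * (Matrix.of Chat)ᵀ)
    (ΓLap : Matrix (Fin D) (Fin D) ℝ) (hΓLap : ΓLap = (Fmᵀ * ΓE⁻¹ * Fm + Γpr⁻¹)⁻¹)
    (uMAP : Fin D → ℝ)
    (huMAP : uMAP = ΓLap *ᵥ (Fmᵀ *ᵥ (ΓE⁻¹ *ᵥ (y - f - μE)) + Γpr⁻¹ *ᵥ μpr)) :
    μhat = uMAP ∧ Γhat * Γpr⁻¹ * Γhat = ΓLap := by
  have hprsym : Γprᵀ = Γpr := hΓpr.isHermitian.eq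
  have hPsym : (Γpr⁻¹)ᵀ = Γpr⁻¹ := by rw [Matrix.transpose_nonsing_inv, hprsym]
  have hEsym : (ΓE⁻¹)ᵀ = ΓE⁻¹ := by
    have h : ΓEᵀ = ΓE := hΓE.isHermitian.eq
    rw [Matrix.transpose_nonsing_inv, h]
  have hQps : (Fmᵀ * ΓE⁻¹ * Fm).PosSemidef := by
    have h := (hΓE.inv.posSemidef).mul_mul_conjTranspose_same Fmᵀ
    simpa using h
  have hK : (Fmᵀ * ΓE⁻¹ * Fm + Γpr⁻¹).PosDef := Matrix.PosDef.posSemidef_add hQps hΓpr.inv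
  have hKdet : IsUnit (Fmᵀ * ΓE⁻¹ * Fm + Γpr⁻¹).det := isUnit_iff_ne_zero.mpr hK.det_pos.ne'
  have hprdet : IsUnit Γpr.det := isUnit_iff_ne_zero.mpr hΓpr.det_pos.ne'
  -- STEP A: stationarity in μ
  have stepA : ∀ v : Fin D → ℝ,
      v ⬝ᵥ (Γpr⁻¹ *ᵥ (μhat - μpr) -
        Fmᵀ *ᵥ (ΓE⁻¹ *ᵥ (y - μE - (Fm *ᵥ μhat + f)))) = 0 := by
    intro v
    have hcurve : HasDerivAt (fun t : ℝ => (μhat + t • v, Chat))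
        ((v, 0) : (Fin D → ℝ) × (Fin D → Fin D → ℝ)) 0 := by
      have h1 : HasDerivAt (fun t : ℝ => μhat + t • v) v 0 := by
        simpa using (((hasDerivAt_id (0:ℝ)).smul_const v).const_add μhat)
      exact h1.prodMk (hasDerivAt_const 0 Chat)
    have hstat' : HasFDerivAt L (0 : ((Fin D → ℝ) × (Fin D → Fin D → ℝ)) →L[ℝ] ℝ)
        ((fun t : ℝ => (μhat + t • v, Chat)) 0) := by simpa using hstat
    have hz : HasDerivAt (fun t : ℝ => L (μhat + t • v, Chat)) 0 0 := by
      simpa [Function.comp_def] using hstat'.comp_hasDerivAt 0 hcurve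
    have hfun : (fun t : ℝ => L (μhat + t • v, Chat)) = fun t : ℝ =>
        (θ ^ 2 * (((Matrix.of Chat * (Matrix.of Chat)ᵀ)⁻¹ * Γpr).trace)
          + θ ^ 2 * ((Γpr⁻¹ * (Matrix.of Chat * (Matrix.of Chat)ᵀ)).trace)
          + θ ^ 2 * ((ΓE⁻¹ * (Fm * Matrix.of Chat) * (Fm * Matrix.of Chat)ᵀ).trace)
          + ((μhat - μpr) ⬝ᵥ Γpr⁻¹ *ᵥ (μhat - μpr)
            + (y - μE - (Fm *ᵥ μhat + f)) ⬝ᵥ ΓE⁻¹ *ᵥ (y - μE - (Fm *ᵥ μhat + f))))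
        + t * ((v ⬝ᵥ Γpr⁻¹ *ᵥ (μhat - μpr) + (μhat - μpr) ⬝ᵥ Γpr⁻¹ *ᵥ v)
            + ((-(Fm *ᵥ v)) ⬝ᵥ ΓE⁻¹ *ᵥ (y - μE - (Fm *ᵥ μhat + f))
              + (y - μE - (Fm *ᵥ μhat + f)) ⬝ᵥ ΓE⁻¹ *ᵥ (-(Fm *ᵥ v))))
        + t ^ 2 * (v ⬝ᵥ Γpr⁻¹ *ᵥ v + (-(Fm *ᵥ v)) ⬝ᵥ ΓE⁻¹ *ᵥ (-(Fm *ᵥ v))) := by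
      funext t
      rw [hL]
      dsimp only
      rw [term5_eq, tr_th]
      have e2 : μhat + t • v - μpr = (μhat - μpr) + t • v := add_sub_right_comm μhat (t • v) μpr
      have e4 : y - μE - (Fm *ᵥ (μhat + t • v) + f) =
          (y - μE - (Fm *ᵥ μhat + f)) + t • (-(Fm *ᵥ v)) := by
        rw [Matrix.mulVec_add, Matrix.mulVec_smul, smul_neg]
        abel
      rw [e2, e4, dp_quad, dp_quad]
      ring
    have hD : HasDerivAt (fun t : ℝ => L (μhat + t • v, Chat))
        ((v ⬝ᵥ Γpr⁻¹ *ᵥ (μhat - μpr) + (μhat - μpr) ⬝ᵥ Γpr⁻¹ *ᵥ v)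
          + ((-(Fm *ᵥ v)) ⬝ᵥ ΓE⁻¹ *ᵥ (y - μE - (Fm *ᵥ μhat + f))
            + (y - μE - (Fm *ᵥ μhat + f)) ⬝ᵥ ΓE⁻¹ *ᵥ (-(Fm *ᵥ v)))) 0 := by
      rw [hfun]; exact quadDeriv _ _ _
    have h0 := hz.unique hD
    rw [dp_sym Γpr⁻¹ hPsym (μhat - μpr) v] at h0
    rw [dp_sym ΓE⁻¹ hEsym (y - μE - (Fm *ᵥ μhat + f)) (-(Fm *ᵥ v))] at h0
    simp only [neg_dotProduct] at h0
    rw [dotProduct_sub, ← dp_shift]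
    linarith
  -- μhat = uMAP
  have hμ : μhat = uMAP := by
    have hz0 : Γpr⁻¹ *ᵥ (μhat - μpr) -
        Fmᵀ *ᵥ (ΓE⁻¹ *ᵥ (y - μE - (Fm *ᵥ μhat + f))) = 0 := by
      have := stepA (Γpr⁻¹ *ᵥ (μhat - μpr) -
        Fmᵀ *ᵥ (ΓE⁻¹ *ᵥ (y - μE - (Fm *ᵥ μhat + f))))
      rwa [dotProduct_self_eq_zero] at this
    have hw : y - μE - (Fm *ᵥ μhat + f) = (y - f - μE) - Fm *ᵥ μhat := by abel
    have hexp : Fmᵀ *ᵥ (ΓE⁻¹ *ᵥ (y - μE - (Fm *ᵥ μhat + f))) =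
        Fmᵀ *ᵥ (ΓE⁻¹ *ᵥ (y - f - μE)) - (Fmᵀ * ΓE⁻¹ * Fm) *ᵥ μhat := by
      rw [hw, Matrix.mulVec_sub, Matrix.mulVec_sub]
      simp [Matrix.mulVec_mulVec, Matrix.mul_assoc]
    have hKμ : (Fmᵀ * ΓE⁻¹ * Fm + Γpr⁻¹) *ᵥ μhat =
        Fmᵀ *ᵥ (ΓE⁻¹ *ᵥ (y - f - μE)) + Γpr⁻¹ *ᵥ μpr := by
      have h1 : Γpr⁻¹ *ᵥ (μhat - μpr) = Γpr⁻¹ *ᵥ μhat - Γpr⁻¹ *ᵥ μpr := Matrix.mulVec_sub _ _ _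
      rw [hexp, h1] at hz0
      rw [Matrix.add_mulVec]
      have : (Γpr⁻¹ *ᵥ μhat - Γpr⁻¹ *ᵥ μpr) -
          (Fmᵀ *ᵥ (ΓE⁻¹ *ᵥ (y - f - μE)) - (Fmᵀ * ΓE⁻¹ * Fm) *ᵥ μhat) =
          ((Fmᵀ * ΓE⁻¹ * Fm) *ᵥ μhat + Γpr⁻¹ *ᵥ μhat) -
          (Fmᵀ *ᵥ (ΓE⁻¹ *ᵥ (y - f - μE)) + Γpr⁻¹ *ᵥ μpr) := by abel
      rw [this] at hz0
      exact sub_eq_zero.mp hz0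
    rw [huMAP, hΓLap, ← hKμ, Matrix.mulVec_mulVec,
      Matrix.nonsing_inv_mul _ hKdet, Matrix.one_mulVec]
  refine ⟨hμ, ?_⟩
  -- STEP B: stationarity in C
  have hΓdet : IsUnit (Matrix.of Chat * (Matrix.of Chat)ᵀ).det := by
    rw [Matrix.det_mul, Matrix.det_transpose]; exact hChatInv.mul hChatInv
  have hΓsym : (Matrix.of Chat * (Matrix.of Chat)ᵀ)ᵀ = Matrix.of Chat * (Matrix.of Chat)ᵀ := by
    rw [Matrix.transpose_mul, Matrix.transpose_transpose]
  have hΓisym : ((Matrix.of Chat * (Matrix.of Chat)ᵀ)⁻¹)ᵀ =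
      (Matrix.of Chat * (Matrix.of Chat)ᵀ)⁻¹ := by
    rw [Matrix.transpose_nonsing_inv, hΓsym]
  have hQsym : (Fmᵀ * ΓE⁻¹ * Fm)ᵀ = Fmᵀ * ΓE⁻¹ * Fm := hQps.isHermitian.eq
  have hM1sym : ((Matrix.of Chat * (Matrix.of Chat)ᵀ)⁻¹ * Γpr *
      (Matrix.of Chat * (Matrix.of Chat)ᵀ)⁻¹)ᵀ =
      (Matrix.of Chat * (Matrix.of Chat)ᵀ)⁻¹ * Γpr *
      (Matrix.of Chat * (Matrix.of Chat)ᵀ)⁻¹ := by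
    rw [Matrix.transpose_mul, Matrix.transpose_mul, hΓisym, hprsym]
    simp [Matrix.mul_assoc]
  have hθ2 : (θ:ℝ) ^ 2 ≠ 0 := pow_ne_zero 2 hθ
  have stepB : ∀ V : Fin D → Fin D → ℝ,
      (((Matrix.of Chat)ᵀ * (Fmᵀ * ΓE⁻¹ * Fm + Γpr⁻¹ -
        (Matrix.of Chat * (Matrix.of Chat)ᵀ)⁻¹ * Γpr * (Matrix.of Chat * (Matrix.of Chat)ᵀ)⁻¹))
        * Matrix.of V).trace = 0 := by
    intro V
    have hcurve : HasDerivAt (fun t : ℝ => (μhat, Chat + t • V))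
        ((0, V) : (Fin D → ℝ) × (Fin D → Fin D → ℝ)) 0 := by
      have h1 : HasDerivAt (fun t : ℝ => Chat + t • V) V 0 := by
        simpa using (((hasDerivAt_id (0:ℝ)).smul_const V).const_add Chat)
      exact (hasDerivAt_const 0 μhat).prodMk h1
    have hstat' : HasFDerivAt L (0 : ((Fin D → ℝ) × (Fin D → Fin D → ℝ)) →L[ℝ] ℝ)
        ((fun t : ℝ => (μhat, Chat + t • V)) 0) := by simpa using hstat
    have hz : HasDerivAt (fun t : ℝ => L (μhat, Chat + t • V)) 0 0 := by
      simpa [Function.comp_def] using hstat'.comp_hasDerivAt 0 hcurve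
    have hf1 := inv_trace_deriv (Matrix.of Chat * (Matrix.of Chat)ᵀ)
      (Matrix.of Chat * (Matrix.of V)ᵀ + Matrix.of V * (Matrix.of Chat)ᵀ)
      (Matrix.of V * (Matrix.of V)ᵀ) Γpr hΓdet
      (fun s => (Matrix.of Chat + s • Matrix.of V) * (Matrix.of Chat + s • Matrix.of V)ᵀ)
      (fun s => sq_expand (Matrix.of Chat) (Matrix.of V) s)
    have hfun : (fun t : ℝ => L (μhat, Chat + t • V)) = fun t : ℝ =>
        θ ^ 2 * (((Matrix.of Chat + t • Matrix.of V) *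
            (Matrix.of Chat + t • Matrix.of V)ᵀ)⁻¹ * Γpr).trace
        + (μhat - μpr) ⬝ᵥ Γpr⁻¹ *ᵥ (μhat - μpr)
        + θ ^ 2 * (Γpr⁻¹ * ((Matrix.of Chat + t • Matrix.of V) *
            (Matrix.of Chat + t • Matrix.of V)ᵀ)).trace
        + (y - μE - (Fm *ᵥ μhat + f)) ⬝ᵥ ΓE⁻¹ *ᵥ (y - μE - (Fm *ᵥ μhat + f))
        + θ ^ 2 * (ΓE⁻¹ * ((Fm * Matrix.of Chat + t • (Fm * Matrix.of V)) *
            (Fm * Matrix.of Chat + t • (Fm * Matrix.of V))ᵀ)).trace := by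
      funext t
      rw [hL]
      dsimp only
      rw [term5_eq, tr_th,
        show Matrix.of (Chat + t • V) = Matrix.of Chat + t • Matrix.of V from rfl,
        Matrix.mul_assoc ΓE⁻¹, Matrix.mul_add Fm, Matrix.mul_smul]
    have h3 : HasDerivAt (fun t : ℝ => θ ^ 2 * (Γpr⁻¹ * ((Matrix.of Chat + t • Matrix.of V) *
          (Matrix.of Chat + t • Matrix.of V)ᵀ)).trace)
        (θ ^ 2 * (Γpr⁻¹ * (Matrix.of Chat * (Matrix.of V)ᵀ)).trace
          + θ ^ 2 * (Γpr⁻¹ * (Matrix.of V * (Matrix.of Chat)ᵀ)).trace) 0 := by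
      have he : (fun t : ℝ => θ ^ 2 * (Γpr⁻¹ * ((Matrix.of Chat + t • Matrix.of V) *
          (Matrix.of Chat + t • Matrix.of V)ᵀ)).trace) = fun t : ℝ =>
          θ ^ 2 * (Γpr⁻¹ * (Matrix.of Chat * (Matrix.of Chat)ᵀ)).trace
          + t * (θ ^ 2 * (Γpr⁻¹ * (Matrix.of Chat * (Matrix.of V)ᵀ)).trace
            + θ ^ 2 * (Γpr⁻¹ * (Matrix.of V * (Matrix.of Chat)ᵀ)).trace)
          + t ^ 2 * (θ ^ 2 * (Γpr⁻¹ * (Matrix.of V * (Matrix.of V)ᵀ)).trace) := by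
        funext t
        rw [sq_expand]
        simp only [Matrix.mul_add, Matrix.mul_smul, Matrix.trace_add, Matrix.trace_smul,
          smul_eq_mul]
        ring
      rw [he]; exact quadDeriv _ _ _
    have h5 : HasDerivAt (fun t : ℝ =>
          θ ^ 2 * (ΓE⁻¹ * ((Fm * Matrix.of Chat + t • (Fm * Matrix.of V)) *
            (Fm * Matrix.of Chat + t • (Fm * Matrix.of V))ᵀ)).trace)
        (θ ^ 2 * (ΓE⁻¹ * ((Fm * Matrix.of Chat) * (Fm * Matrix.of V)ᵀ)).trace
          + θ ^ 2 * (ΓE⁻¹ * ((Fm * Matrix.of V) * (Fm * Matrix.of Chat)ᵀ)).trace) 0 := by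
      have he : (fun t : ℝ => θ ^ 2 * (ΓE⁻¹ * ((Fm * Matrix.of Chat + t • (Fm * Matrix.of V)) *
            (Fm * Matrix.of Chat + t • (Fm * Matrix.of V))ᵀ)).trace) = fun t : ℝ =>
          θ ^ 2 * (ΓE⁻¹ * ((Fm * Matrix.of Chat) * (Fm * Matrix.of Chat)ᵀ)).trace
          + t * (θ ^ 2 * (ΓE⁻¹ * ((Fm * Matrix.of Chat) * (Fm * Matrix.of V)ᵀ)).trace
            + θ ^ 2 * (ΓE⁻¹ * ((Fm * Matrix.of V) * (Fm * Matrix.of Chat)ᵀ)).trace)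
          + t ^ 2 * (θ ^ 2 * (ΓE⁻¹ * ((Fm * Matrix.of V) * (Fm * Matrix.of V)ᵀ)).trace) := by
        funext t
        rw [sq_expand]
        simp only [Matrix.mul_add, Matrix.mul_smul, Matrix.trace_add, Matrix.trace_smul,
          smul_eq_mul]
        ring
      rw [he]; exact quadDeriv _ _ _
    have hD : HasDerivAt (fun t : ℝ => L (μhat, Chat + t • V))
        (θ ^ 2 * (-((((Matrix.of Chat * (Matrix.of Chat)ᵀ)⁻¹ *
            (Matrix.of Chat * (Matrix.of V)ᵀ + Matrix.of V * (Matrix.of Chat)ᵀ)) *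
            (Matrix.of Chat * (Matrix.of Chat)ᵀ)⁻¹ * Γpr).trace))
          + 0
          + (θ ^ 2 * (Γpr⁻¹ * (Matrix.of Chat * (Matrix.of V)ᵀ)).trace
            + θ ^ 2 * (Γpr⁻¹ * (Matrix.of V * (Matrix.of Chat)ᵀ)).trace)
          + 0
          + (θ ^ 2 * (ΓE⁻¹ * ((Fm * Matrix.of Chat) * (Fm * Matrix.of V)ᵀ)).trace
            + θ ^ 2 * (ΓE⁻¹ * ((Fm * Matrix.of V) * (Fm * Matrix.of Chat)ᵀ)).trace)) 0 := by
      rw [hfun]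
      exact ((((hf1.const_mul (θ ^ 2)).add (hasDerivAt_const 0 _)).add h3).add
        (hasDerivAt_const 0 _)).add h5
    have h0 := hz.unique hD
    -- trace algebra
    have e1 : (((Matrix.of Chat * (Matrix.of Chat)ᵀ)⁻¹ *
        (Matrix.of Chat * (Matrix.of V)ᵀ + Matrix.of V * (Matrix.of Chat)ᵀ)) *
        (Matrix.of Chat * (Matrix.of Chat)ᵀ)⁻¹ * Γpr).trace =
        2 * (((Matrix.of Chat)ᵀ * ((Matrix.of Chat * (Matrix.of Chat)ᵀ)⁻¹ * Γpr *
          (Matrix.of Chat * (Matrix.of Chat)ᵀ)⁻¹)) * Matrix.of V).trace := by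
      rw [show ((Matrix.of Chat * (Matrix.of Chat)ᵀ)⁻¹ *
          (Matrix.of Chat * (Matrix.of V)ᵀ + Matrix.of V * (Matrix.of Chat)ᵀ)) *
          (Matrix.of Chat * (Matrix.of Chat)ᵀ)⁻¹ * Γpr =
          (Matrix.of Chat * (Matrix.of Chat)ᵀ)⁻¹ *
          ((Matrix.of Chat * (Matrix.of V)ᵀ + Matrix.of V * (Matrix.of Chat)ᵀ) *
            ((Matrix.of Chat * (Matrix.of Chat)ᵀ)⁻¹ * Γpr)) from by simp [Matrix.mul_assoc]]
      rw [Matrix.trace_mul_comm]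
      rw [show ((Matrix.of Chat * (Matrix.of V)ᵀ + Matrix.of V * (Matrix.of Chat)ᵀ) *
          ((Matrix.of Chat * (Matrix.of Chat)ᵀ)⁻¹ * Γpr)) *
          (Matrix.of Chat * (Matrix.of Chat)ᵀ)⁻¹ =
          (Matrix.of Chat * (Matrix.of V)ᵀ + Matrix.of V * (Matrix.of Chat)ᵀ) *
          ((Matrix.of Chat * (Matrix.of Chat)ᵀ)⁻¹ * Γpr *
            (Matrix.of Chat * (Matrix.of Chat)ᵀ)⁻¹) from by simp [Matrix.mul_assoc]]
      rw [Matrix.trace_mul_comm, trace_pair _ _ _ hM1sym]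
    have e2 : (Γpr⁻¹ * (Matrix.of Chat * (Matrix.of V)ᵀ)).trace
        + (Γpr⁻¹ * (Matrix.of V * (Matrix.of Chat)ᵀ)).trace =
        2 * (((Matrix.of Chat)ᵀ * Γpr⁻¹) * Matrix.of V).trace := by
      rw [← Matrix.trace_add, ← Matrix.mul_add, trace_pair _ _ _ hPsym]
    have e3 : (ΓE⁻¹ * ((Fm * Matrix.of Chat) * (Fm * Matrix.of V)ᵀ)).trace
        + (ΓE⁻¹ * ((Fm * Matrix.of V) * (Fm * Matrix.of Chat)ᵀ)).trace =
        2 * (((Matrix.of Chat)ᵀ * (Fmᵀ * ΓE⁻¹ * Fm)) * Matrix.of V).trace := by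
      rw [liftQ, liftQ, ← Matrix.trace_add, ← Matrix.mul_add, trace_pair _ _ _ hQsym]
    have hsplit : ((Matrix.of Chat)ᵀ * (Fmᵀ * ΓE⁻¹ * Fm + Γpr⁻¹ -
        (Matrix.of Chat * (Matrix.of Chat)ᵀ)⁻¹ * Γpr * (Matrix.of Chat * (Matrix.of Chat)ᵀ)⁻¹))
        * Matrix.of V =
        ((Matrix.of Chat)ᵀ * (Fmᵀ * ΓE⁻¹ * Fm)) * Matrix.of V
        + ((Matrix.of Chat)ᵀ * Γpr⁻¹) * Matrix.of V
        - ((Matrix.of Chat)ᵀ * ((Matrix.of Chat * (Matrix.of Chat)ᵀ)⁻¹ * Γpr *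
          (Matrix.of Chat * (Matrix.of Chat)ᵀ)⁻¹)) * Matrix.of V := by
      rw [Matrix.mul_sub, Matrix.mul_add, Matrix.sub_mul, Matrix.add_mul]
    rw [hsplit, Matrix.trace_sub, Matrix.trace_add]
    have h2 : θ ^ 2 * (2 * ((((Matrix.of Chat)ᵀ * (Fmᵀ * ΓE⁻¹ * Fm)) * Matrix.of V).trace
        + (((Matrix.of Chat)ᵀ * Γpr⁻¹) * Matrix.of V).trace
        - (((Matrix.of Chat)ᵀ * ((Matrix.of Chat * (Matrix.of Chat)ᵀ)⁻¹ * Γpr *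
          (Matrix.of Chat * (Matrix.of Chat)ᵀ)⁻¹)) * Matrix.of V).trace)) = 0 := by
      linear_combination (-1 : ℝ) * h0 + θ ^ 2 * e1 - θ ^ 2 * e2 - θ ^ 2 * e3
    have h4 := (mul_eq_zero.mp h2).resolve_left hθ2
    linarith
  -- conclude: the matrix is zero
  have hNzero : (Matrix.of Chat)ᵀ * (Fmᵀ * ΓE⁻¹ * Fm + Γpr⁻¹ -
      (Matrix.of Chat * (Matrix.of Chat)ᵀ)⁻¹ * Γpr * (Matrix.of Chat * (Matrix.of Chat)ᵀ)⁻¹) = 0 := by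
    apply tr_zero_of_all
    exact stepB ((Matrix.of Chat)ᵀ * (Fmᵀ * ΓE⁻¹ * Fm + Γpr⁻¹ -
      (Matrix.of Chat * (Matrix.of Chat)ᵀ)⁻¹ * Γpr * (Matrix.of Chat * (Matrix.of Chat)ᵀ)⁻¹))ᵀ
  have hC0Tdet : IsUnit ((Matrix.of Chat)ᵀ).det := by
    rw [Matrix.det_transpose]; exact hChatInv
  have hRzero : Fmᵀ * ΓE⁻¹ * Fm + Γpr⁻¹ -
      (Matrix.of Chat * (Matrix.of Chat)ᵀ)⁻¹ * Γpr * (Matrix.of Chat * (Matrix.of Chat)ᵀ)⁻¹ = 0 := by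
    calc Fmᵀ * ΓE⁻¹ * Fm + Γpr⁻¹ -
        (Matrix.of Chat * (Matrix.of Chat)ᵀ)⁻¹ * Γpr * (Matrix.of Chat * (Matrix.of Chat)ᵀ)⁻¹
        = ((Matrix.of Chat)ᵀ)⁻¹ * ((Matrix.of Chat)ᵀ *
          (Fmᵀ * ΓE⁻¹ * Fm + Γpr⁻¹ -
          (Matrix.of Chat * (Matrix.of Chat)ᵀ)⁻¹ * Γpr * (Matrix.of Chat * (Matrix.of Chat)ᵀ)⁻¹)) := by
          rw [← Matrix.mul_assoc, Matrix.nonsing_inv_mul _ hC0Tdet, Matrix.one_mul]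
      _ = 0 := by rw [hNzero, Matrix.mul_zero]
  have hKeq : Fmᵀ * ΓE⁻¹ * Fm + Γpr⁻¹ =
      (Matrix.of Chat * (Matrix.of Chat)ᵀ)⁻¹ * Γpr * (Matrix.of Chat * (Matrix.of Chat)ᵀ)⁻¹ :=
    sub_eq_zero.mp hRzero
  have hΓpr_eq : Γpr = (Matrix.of Chat * (Matrix.of Chat)ᵀ) * (Fmᵀ * ΓE⁻¹ * Fm + Γpr⁻¹) *
      (Matrix.of Chat * (Matrix.of Chat)ᵀ) := by
    rw [hKeq]
    rw [show (Matrix.of Chat * (Matrix.of Chat)ᵀ) *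
        ((Matrix.of Chat * (Matrix.of Chat)ᵀ)⁻¹ * Γpr * (Matrix.of Chat * (Matrix.of Chat)ᵀ)⁻¹) *
        (Matrix.of Chat * (Matrix.of Chat)ᵀ) =
        ((Matrix.of Chat * (Matrix.of Chat)ᵀ) * (Matrix.of Chat * (Matrix.of Chat)ᵀ)⁻¹) * Γpr *
        ((Matrix.of Chat * (Matrix.of Chat)ᵀ)⁻¹ * (Matrix.of Chat * (Matrix.of Chat)ᵀ)) from by
        simp [Matrix.mul_assoc]]
    rw [Matrix.mul_nonsing_inv _ hΓdet, Matrix.nonsing_inv_mul _ hΓdet, Matrix.one_mul,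
      Matrix.mul_one]
  have hfinal : (Fmᵀ * ΓE⁻¹ * Fm + Γpr⁻¹) *
      ((Matrix.of Chat * (Matrix.of Chat)ᵀ) * Γpr⁻¹ * (Matrix.of Chat * (Matrix.of Chat)ᵀ)) = 1 := by
    rw [hKeq]
    rw [show ((Matrix.of Chat * (Matrix.of Chat)ᵀ)⁻¹ * Γpr * (Matrix.of Chat * (Matrix.of Chat)ᵀ)⁻¹) *
        ((Matrix.of Chat * (Matrix.of Chat)ᵀ) * Γpr⁻¹ * (Matrix.of Chat * (Matrix.of Chat)ᵀ)) =
        (Matrix.of Chat * (Matrix.of Chat)ᵀ)⁻¹ * (Γpr *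
          (((Matrix.of Chat * (Matrix.of Chat)ᵀ)⁻¹ * (Matrix.of Chat * (Matrix.of Chat)ᵀ)) *
            (Γpr⁻¹ * (Matrix.of Chat * (Matrix.of Chat)ᵀ)))) from by simp [Matrix.mul_assoc]]
    rw [Matrix.nonsing_inv_mul _ hΓdet, Matrix.one_mul, ← Matrix.mul_assoc Γpr,
      Matrix.mul_nonsing_inv _ hprdet, Matrix.one_mul, Matrix.nonsing_inv_mul _ hΓdet]
  rw [hΓhat, hΓLap]
  exact (Matrix.inv_eq_right_inv hfinal).symm
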